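/- Let p_X = N(μ_X, v²) and p_H = N(0, w²) be Gaussian probability distributions on ℝ with v, w > 0, let σ² ∈ (0, 1] and 0 ≤ L < 1, and let x ~ p_X and η ~ p_H be independent. Define ψ*(z) = m*·z + (1 − σ²·m*)·μ_X where m* is σ²·v² / (σ⁴·v² + w²) clamped to [1/(1+L), 1/(1−L)]. Then ψ* minimizes the expected reconstruction loss E[|ψ(σ²·x + η) − x|²] among all continuously differentiable functions ψ : ℝ → ℝ with 1/(1+L) ≤ ψ′(z) ≤ 1/(1−L) for all z ∈ ℝ (and with ψ(σ²x+η) square-integrable). -/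

import Mathlib

open MeasureTheory ProbabilityTheory
open scoped NNReal ENNReal


lemma gaussianPDFReal_continuous (c : ℝ) (V : ℝ≥0) : Continuous (gaussianPDFReal c V) := by
  unfold gaussianPDFReal; fun_prop

lemma gaussianPDFReal_hasDerivAt (c : ℝ) (V : ℝ≥0) (x : ℝ) :
    HasDerivAt (gaussianPDFReal c V) (-((x - c)/V) * gaussianPDFReal c V x) x := by
  rcases eq_or_ne V 0 with h | h
  · simp only [h, gaussianPDFReal_zero_var]
    simpa using (hasDerivAt_const x (0:ℝ))
  have hVpos : (0:ℝ) < V := by positivity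
  unfold gaussianPDFReal
  have h1 : HasDerivAt (fun x : ℝ => -(x - c)^2 / (2*V)) (-(x-c)/V) x := by
    have h2 : HasDerivAt (fun x : ℝ => x - c) 1 x := (hasDerivAt_id x).sub_const c
    have h3 := (h2.pow 2).neg.div_const (2*(V:ℝ))
    refine h3.congr_deriv ?_
    push_cast; ring
  have h4 := (h1.exp).const_mul ((Real.sqrt (2 * Real.pi * V))⁻¹)
  refine h4.congr_deriv ?_
  ring

lemma integral_gaussianReal_eq (c : ℝ) {V : ℝ≥0} (hV : V ≠ 0) (g : ℝ → ℝ) :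
    ∫ x, g x ∂(gaussianReal c V) = ∫ x, gaussianPDFReal c V x * g x := by
  rw [gaussianReal_of_var_ne_zero c hV, gaussianPDF_def]
  have h : (fun x => ENNReal.ofReal (gaussianPDFReal c V x))
      = (fun x => ((gaussianPDFReal c V x).toNNReal : ℝ≥0∞)) := rfl
  rw [h, integral_withDensity_eq_integral_smul ((measurable_gaussianPDFReal c V).real_toNNReal)]
  congr 1; ext x
  simp [NNReal.smul_def, Real.coe_toNNReal _ (gaussianPDFReal_nonneg c V x)]

lemma integrable_gaussianReal_iff (c : ℝ) {V : ℝ≥0} (hV : V ≠ 0) (g : ℝ → ℝ) :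
    Integrable g (gaussianReal c V) ↔
      Integrable (fun x => gaussianPDFReal c V x * g x) volume := by
  rw [gaussianReal_of_var_ne_zero c hV, gaussianPDF_def]
  have h : (fun x => ENNReal.ofReal (gaussianPDFReal c V x))
      = (fun x => ((gaussianPDFReal c V x).toNNReal : ℝ≥0∞)) := rfl
  rw [h, integrable_withDensity_iff_integrable_smul ((measurable_gaussianPDFReal c V).real_toNNReal)]
  apply integrable_congr
  filter_upwards with x
  simp [NNReal.smul_def, Real.coe_toNNReal _ (gaussianPDFReal_nonneg c V x)]

lemma integrable_one_add_sq_mul_gaussianPDFReal (c : ℝ) (V : ℝ≥0) :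
    Integrable (fun t : ℝ => (1 + t^2) * gaussianPDFReal c V t) volume := by
  rcases eq_or_ne V 0 with h | h
  · simp only [h, gaussianPDFReal_zero_var]
    simpa using integrable_zero ℝ ℝ (volume : Measure ℝ)
  have hVpos : (0:ℝ) < V := by positivity
  have hb : (0:ℝ) < 1/(2*V) := by positivity
  have key : Integrable (fun u : ℝ => (1 + (u + c)^2) * Real.exp (-(1/(2*(V:ℝ))) * u^2)) volume := by
    have e1 : Integrable (fun u : ℝ => Real.exp (-(1/(2*(V:ℝ))) * u^2)) volume :=
      integrable_exp_neg_mul_sq hb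
    have e2 : Integrable (fun u : ℝ => u * Real.exp (-(1/(2*(V:ℝ))) * u^2)) volume :=
      integrable_mul_exp_neg_mul_sq hb
    have e3 : Integrable (fun u : ℝ => u^2 * Real.exp (-(1/(2*(V:ℝ))) * u^2)) volume := by
      have := integrable_rpow_mul_exp_neg_mul_sq hb (s := 2) (by norm_num)
      apply this.congr
      filter_upwards with u
      rw [show ((2:ℝ) = ((2:ℕ):ℝ)) by norm_num, Real.rpow_natCast]
    have := ((e1.const_mul (1 + c^2)).add (e2.const_mul (2*c))).add e3
    apply this.congr
    filter_upwards with u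
    simp only [Pi.add_apply]
    ring
  have key2 := key.comp_sub_right c
  have hmono : Integrable (fun t : ℝ => (1 + t^2) * Real.exp (-(1/(2*(V:ℝ))) * (t - c)^2)) volume := by
    apply key2.congr
    filter_upwards with t
    ring_nf
  have := hmono.const_mul ((Real.sqrt (2 * Real.pi * V))⁻¹)
  apply this.congr
  filter_upwards with t
  unfold gaussianPDFReal
  rw [show -(t - c)^2 / (2*(V:ℝ)) = -(1/(2*(V:ℝ))) * (t - c)^2 by ring]
  ring

/-- Stein's identity for the real Gaussian measure. -/
lemma stein_gaussianReal (c : ℝ) {V : ℝ≥0} (hV : V ≠ 0) (f f' : ℝ → ℝ)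
    (hd : ∀ t, HasDerivAt f (f' t) t) (hc : Continuous f')
    (M : ℝ) (hM : ∀ t, |f' t| ≤ M) :
    ∫ t, (t - c) * f t ∂(gaussianReal c V) = (V : ℝ) * ∫ t, f' t ∂(gaussianReal c V) := by
  have hVpos : (0:ℝ) < V := by positivity
  have hfc : Continuous f := by
    have : Differentiable ℝ f := fun t => (hd t).differentiableAt
    exact this.continuous
  have hM0 : 0 ≤ M := le_trans (abs_nonneg _) (hM 0)
  -- Lipschitz bound hence linear growth
  have hlip : LipschitzWith M.toNNReal f := by
    apply lipschitzWith_of_nnnorm_deriv_le (fun t => (hd t).differentiableAt)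
    intro t
    rw [(hd t).deriv]
    rw [← NNReal.coe_le_coe, coe_nnnorm, Real.coe_toNNReal _ hM0, Real.norm_eq_abs]
    exact hM t
  have hgrow : ∀ t : ℝ, |f t| ≤ |f 0| + M * |t| := by
    intro t
    have h1 := hlip.dist_le_mul t 0
    rw [Real.dist_eq, Real.dist_eq, Real.coe_toNNReal _ hM0, sub_zero] at h1
    have := abs_sub_abs_le_abs_sub (f t) (f 0)
    linarith
  set φ := gaussianPDFReal c V with hφ
  have φcont : Continuous φ := gaussianPDFReal_continuous c V
  have φnn : ∀ t, 0 ≤ φ t := gaussianPDFReal_nonneg c V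
  have master : Integrable (fun t : ℝ => (1 + t^2) * φ t) volume :=
    integrable_one_add_sq_mul_gaussianPDFReal c V
  -- Integrability of the three pieces
  have intA : Integrable (fun t => f' t * φ t) volume := by
    apply Integrable.mono' (master.const_mul M) ((hc.mul φcont).aestronglyMeasurable)
    filter_upwards with t
    rw [Real.norm_eq_abs, Pi.mul_apply, abs_mul, abs_of_nonneg (φnn t)]
    have h1 : (1:ℝ) ≤ 1 + t^2 := by nlinarith [sq_nonneg t]
    calc |f' t| * φ t ≤ M * φ t := by
          apply mul_le_mul_of_nonneg_right (hM t) (φnn t)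
      _ ≤ M * ((1 + t^2) * φ t) := by nlinarith [φnn t, mul_le_mul_of_nonneg_right h1 (φnn t)]
  have intB : Integrable (fun t => (t - c) * f t * φ t) volume := by
    set C := (|c| + 1) * (|f 0| + M) + (|f 0| + M) with hC
    apply Integrable.mono' (master.const_mul C)
      ((((continuous_id.sub continuous_const).mul hfc).mul φcont).aestronglyMeasurable)
    filter_upwards with t
    simp only [Pi.mul_apply, Pi.sub_apply, id]
    rw [Real.norm_eq_abs, abs_mul, abs_mul, abs_of_nonneg (φnn t)]
    have h1 : |t - c| ≤ |t| + |c| := abs_sub t c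
    have h2 := hgrow t
    have ht1 : |t| ≤ 1 + t^2 := by nlinarith [abs_nonneg t, sq_abs t, sq_nonneg (|t| - 1)]
    have hfnn : 0 ≤ |f 0| := abs_nonneg _
    have hcnn : 0 ≤ |c| := abs_nonneg _
    have htnn : 0 ≤ |t| := abs_nonneg _
    have hfb : 0 ≤ |f t| := abs_nonneg _
    have key : |t - c| * |f t| ≤ C * (1 + t^2) := by
      have : |t - c| * |f t| ≤ (|t| + |c|) * (|f 0| + M * |t|) := by
        apply mul_le_mul h1 h2 hfb (by positivity)
      have expand : (|t| + |c|) * (|f 0| + M * |t|) ≤ C * (1 + t^2) := by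
        rw [hC]
        have h1u : (1:ℝ) ≤ 1 + t^2 := by nlinarith [sq_nonneg t]
        nlinarith [mul_le_mul_of_nonneg_left ht1 hfnn,
          mul_le_mul_of_nonneg_left ht1 hM0,
          mul_le_mul_of_nonneg_left h1u (mul_nonneg hcnn hfnn),
          mul_le_mul_of_nonneg_left ht1 (mul_nonneg hcnn hM0),
          sq_abs t, mul_nonneg hM0 (sq_nonneg t),
          mul_nonneg (mul_nonneg hcnn hM0) htnn]
      linarith
    calc |t - c| * |f t| * φ t ≤ C * (1 + t^2) * φ t :=
          mul_le_mul_of_nonneg_right key (φnn t)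
      _ = C * ((1 + t^2) * φ t) := by ring
  have intH : Integrable (fun t => f t * φ t) volume := by
    apply Integrable.mono' (master.const_mul (|f 0| + M))
      ((hfc.mul φcont).aestronglyMeasurable)
    filter_upwards with t
    rw [Real.norm_eq_abs, Pi.mul_apply, abs_mul, abs_of_nonneg (φnn t)]
    have h2 := hgrow t
    have ht1 : |t| ≤ 1 + t^2 := by nlinarith [abs_nonneg t, sq_abs t, sq_nonneg (|t| - 1)]
    have : |f t| ≤ (|f 0| + M) * (1 + t^2) := by
      nlinarith [mul_le_mul_of_nonneg_left ht1 hM0, sq_nonneg t, abs_nonneg (f 0)]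
    calc |f t| * φ t ≤ (|f 0| + M) * (1 + t^2) * φ t :=
          mul_le_mul_of_nonneg_right this (φnn t)
      _ = (|f 0| + M) * ((1 + t^2) * φ t) := by ring
  -- derivative of f * φ
  have hH' : ∀ t, HasDerivAt (fun t => f t * φ t)
      (f' t * φ t + (-(1/(V:ℝ))) * ((t - c) * f t * φ t)) t := by
    intro t
    have := (hd t).mul (gaussianPDFReal_hasDerivAt c V t)
    refine this.congr_deriv ?_
    field_simp
    ring
  have intH' : Integrable (fun t => f' t * φ t + (-(1/(V:ℝ))) * ((t - c) * f t * φ t)) volume :=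
    intA.add (intB.const_mul _)
  have hzero : ∫ t, (f' t * φ t + (-(1/(V:ℝ))) * ((t - c) * f t * φ t)) = 0 :=
    integral_eq_zero_of_hasDerivAt_of_integrable hH' intH' intH
  rw [integral_add intA (intB.const_mul _), integral_const_mul] at hzero
  have hsplit : ∫ t, (t - c) * f t * φ t = (V:ℝ) * ∫ t, f' t * φ t := by
    have hVne : (V:ℝ) ≠ 0 := ne_of_gt hVpos
    field_simp at hzero ⊢
    linarith
  rw [integral_gaussianReal_eq c hV, integral_gaussianReal_eq c hV]
  calc ∫ x, gaussianPDFReal c V x * ((x - c) * f x)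
      = ∫ t, (t - c) * f t * φ t := by congr 1; ext t; rw [hφ]; ring
    _ = (V:ℝ) * ∫ t, f' t * φ t := hsplit
    _ = (V:ℝ) * ∫ x, gaussianPDFReal c V x * f' x := by
        congr 1; congr 1; ext t; rw [hφ]; ring

lemma integrable_sq_gaussianReal (c : ℝ) (V : ℝ≥0) :
    Integrable (fun x : ℝ => x ^ 2) (gaussianReal c V) := by
  rcases eq_or_ne V 0 with h | h
  · rw [h, gaussianReal_zero_var]
    apply MeasureTheory.Integrable.mono' (integrable_const (‖c^2‖ : ℝ))
    · fun_prop
    · have hms : MeasurableSet {x : ℝ | ‖x^2‖ ≤ ‖c^2‖} :=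
        measurableSet_le (by fun_prop) (by fun_prop)
      rw [ae_dirac_iff hms]
  rw [integrable_gaussianReal_iff c h]
  apply Integrable.mono' (integrable_one_add_sq_mul_gaussianPDFReal c V)
    (((gaussianPDFReal_continuous c V).mul (continuous_pow 2)).aestronglyMeasurable)
  filter_upwards with t
  have hnn := gaussianPDFReal_nonneg c V t
  simp only [Pi.mul_apply]
  rw [Real.norm_eq_abs, abs_mul, abs_of_nonneg hnn, abs_of_nonneg (sq_nonneg t)]
  nlinarith [sq_nonneg t]

lemma memℒp_two_id_gaussianReal (c : ℝ) (V : ℝ≥0) :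
    MemLp (fun x : ℝ => x) 2 (gaussianReal c V) := by
  exact (memLp_two_iff_integrable_sq aestronglyMeasurable_id).mpr (integrable_sq_gaussianReal c V)

lemma memℒp_mul_integrable {α : Type*} [MeasurableSpace α] {μ : Measure α} {f g : α → ℝ}
    (hf : MemLp f 2 μ) (hg : MemLp g 2 μ) : Integrable (fun x => f x * g x) μ := by
  have h := (((hf.add hg).integrable_sq).sub hf.integrable_sq).sub hg.integrable_sq
  apply (h.const_mul (1/2 : ℝ)).congr
  filter_upwards with x
  simp only [Pi.add_apply, Pi.sub_apply]
  ring

lemma memℒp_two_fst {μ ν : Measure ℝ} [IsProbabilityMeasure μ] [IsProbabilityMeasure ν]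
    (h : Integrable (fun x : ℝ => x ^ 2) μ) :
    MemLp (fun q : ℝ × ℝ => q.1) 2 (μ.prod ν) := by
  rw [memLp_two_iff_integrable_sq (measurable_fst.aestronglyMeasurable)]
  rw [integrable_prod_iff ((by measurability : Measurable fun q : ℝ × ℝ => q.1 ^ 2).aestronglyMeasurable)]
  constructor
  · filter_upwards with x; exact integrable_const _
  · simpa using h.norm

lemma memℒp_two_snd {μ ν : Measure ℝ} [IsProbabilityMeasure μ] [IsProbabilityMeasure ν]
    (h : Integrable (fun x : ℝ => x ^ 2) ν) :
    MemLp (fun q : ℝ × ℝ => q.2) 2 (μ.prod ν) := by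
  rw [memLp_two_iff_integrable_sq (measurable_snd.aestronglyMeasurable)]
  rw [integrable_prod_iff ((by measurability : Measurable fun q : ℝ × ℝ => q.2 ^ 2).aestronglyMeasurable)]
  constructor
  · filter_upwards with x; exact h
  · simpa using integrable_const (μ := μ) (∫ y, ‖y^2‖ ∂ν)


/-- The value `r` clamped to the interval `[1/(1+L), 1/(1-L)]`. -/
noncomputable def clampedSlope (L r : ℝ) : ℝ :=
  if r < 1 / (1 + L) then 1 / (1 + L)
  else if 1 / (1 - L) < r then 1 / (1 - L) else r

/-- **Reconstruction training with Gaussian prior and noise (Corollary 4.8).**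
Let `pX = N(μX, v²)`, `pH = N(0, w²)`, `s = σ² ∈ (0,1]`, `0 ≤ L < 1`, and set
`ψ*(z) = m* z + (1 - s m*) μX` with `m*` the value `s v²/(s² v² + w²)` clamped
to `[1/(1+L), 1/(1-L)]`. Then `ψ*` minimizes the expected reconstruction loss
`E[|ψ(s·x + η) - x|²]` among all `C¹` functions `ψ : ℝ → ℝ` with
`1/(1+L) ≤ ψ′ ≤ 1/(1-L)` everywhere and `ψ(s·x + η)` square-integrable. -/
theorem recon_training_gaussian_minimizer
    (μX v w s L : ℝ) (hv : 0 < v) (hw : 0 < w)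
    (hs0 : 0 < s) (hs1 : s ≤ 1) (hL0 : 0 ≤ L) (hL1 : L < 1) :
    ∀ ψ : ℝ → ℝ, ContDiff ℝ 1 ψ →
      (∀ z : ℝ, 1 / (1 + L) ≤ deriv ψ z ∧ deriv ψ z ≤ 1 / (1 - L)) →
      Integrable (fun q : ℝ × ℝ => (ψ (s * q.1 + q.2)) ^ 2)
        ((gaussianReal μX (Real.toNNReal (v ^ 2))).prod
          (gaussianReal 0 (Real.toNNReal (w ^ 2)))) →
      (∫ x, ∫ η,
          ((clampedSlope L (s * v ^ 2 / (s ^ 2 * v ^ 2 + w ^ 2))) * (s * x + η) +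
              (1 - s * clampedSlope L (s * v ^ 2 / (s ^ 2 * v ^ 2 + w ^ 2))) * μX
            - x) ^ 2
          ∂(gaussianReal 0 (Real.toNNReal (w ^ 2)))
          ∂(gaussianReal μX (Real.toNNReal (v ^ 2)))) ≤
        ∫ x, ∫ η, (ψ (s * x + η) - x) ^ 2
          ∂(gaussianReal 0 (Real.toNNReal (w ^ 2)))
          ∂(gaussianReal μX (Real.toNNReal (v ^ 2))) := by
  intro ψ hψC hψconstr hψint
  have h1L : (0:ℝ) < 1 + L := by linarith
  have h2L : (0:ℝ) < 1 - L := by linarith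
  set a : ℝ := 1/(1+L) with ha_def
  set b : ℝ := 1/(1-L) with hb_def
  have hapos : 0 < a := by positivity
  have hbpos : 0 < b := by positivity
  have hab : a ≤ b := by
    rw [ha_def, hb_def]
    exact one_div_le_one_div_of_le h2L (by linarith)
  set r : ℝ := s * v ^ 2 / (s ^ 2 * v ^ 2 + w ^ 2) with hr_def
  set m : ℝ := clampedSlope L r with hm_def
  set P : ℝ := s ^ 2 * v ^ 2 + w ^ 2 with hP_def
  have hP : 0 < P := by positivity
  have hPr : P * r = s * v ^ 2 := by
    rw [hr_def, hP_def]; field_simp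
  have hm_cases : (m = a ∧ r < a) ∨ (m = b ∧ b < r) ∨ m = r := by
    rw [hm_def]; unfold clampedSlope
    rw [← ha_def, ← hb_def]
    split_ifs with h1 h2
    · exact Or.inl ⟨rfl, h1⟩
    · exact Or.inr (Or.inl ⟨rfl, h2⟩)
    · exact Or.inr (Or.inr rfl)
  have hma : a ≤ m ∧ m ≤ b := by
    rw [hm_def]; unfold clampedSlope
    rw [← ha_def, ← hb_def]
    split_ifs with h1 h2
    · exact ⟨le_refl a, hab⟩
    · exact ⟨hab, le_refl b⟩
    · exact ⟨not_lt.mp h1, not_lt.mp h2⟩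
  -- measures
  set pX := gaussianReal μX (Real.toNNReal (v ^ 2)) with hpX_def
  set pH := gaussianReal 0 (Real.toNNReal (w ^ 2)) with hpH_def
  set μ := pX.prod pH with hμ_def
  have hvne : Real.toNNReal (v ^ 2) ≠ 0 := by
    simp only [ne_eq, Real.toNNReal_eq_zero, not_le]; positivity
  have hwne : Real.toNNReal (w ^ 2) ≠ 0 := by
    simp only [ne_eq, Real.toNNReal_eq_zero, not_le]; positivity
  have hvco : ((Real.toNNReal (v ^ 2)) : ℝ) = v ^ 2 := Real.coe_toNNReal _ (by positivity)
  have hwco : ((Real.toNNReal (w ^ 2)) : ℝ) = w ^ 2 := Real.coe_toNNReal _ (by positivity)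
  -- the function D and its derivative
  set D : ℝ → ℝ := fun z => ψ z - (m * z + (1 - s * m) * μX) with hD_def
  set D' : ℝ → ℝ := fun z => deriv ψ z - m with hD'_def
  have hψdiff : Differentiable ℝ ψ := hψC.differentiable one_ne_zero
  have hDd : ∀ t, HasDerivAt D (D' t) t := by
    intro t
    have h1 : HasDerivAt ψ (deriv ψ t) t := (hψdiff t).hasDerivAt
    have h2 : HasDerivAt (fun z : ℝ => m * z + (1 - s * m) * μX) m t := by
      simpa using ((hasDerivAt_id t).const_mul m).add_const ((1 - s * m) * μX)
    exact h1.sub h2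
  have hD'c : Continuous D' := (hψC.continuous_deriv le_rfl).sub continuous_const
  have hD'bd : ∀ t, |D' t| ≤ b - a := by
    intro t
    have he : D' t = deriv ψ t - m := rfl
    rw [he, abs_le]
    have h1 := (hψconstr t).1
    have h2 := (hψconstr t).2
    exact ⟨by linarith [hma.2], by linarith [hma.1]⟩
  have hDc : Continuous D := by
    rw [hD_def]; fun_prop
  -- L² memberships on the product
  have hsqX : Integrable (fun x : ℝ => x ^ 2) pX := integrable_sq_gaussianReal _ _
  have hsqH : Integrable (fun x : ℝ => x ^ 2) pH := integrable_sq_gaussianReal _ _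
  have hX2 : MemLp (fun q : ℝ × ℝ => q.1) 2 μ := memℒp_two_fst hsqX
  have hH2 : MemLp (fun q : ℝ × ℝ => q.2) 2 μ := memℒp_two_snd hsqH
  have hZmeas : Measurable (fun q : ℝ × ℝ => s * q.1 + q.2) := by fun_prop
  have hZ2 : MemLp (fun q : ℝ × ℝ => s * q.1 + q.2) 2 μ := (hX2.const_mul s).add hH2
  have hψ2 : MemLp (fun q : ℝ × ℝ => ψ (s * q.1 + q.2)) 2 μ :=
    (memLp_two_iff_integrable_sq
      ((hψC.continuous.measurable.comp hZmeas).aestronglyMeasurable)).mpr hψint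
  have hψs2 : MemLp (fun q : ℝ × ℝ => m * (s * q.1 + q.2) + (1 - s * m) * μX) 2 μ :=
    (hZ2.const_mul m).add (memLp_const _)
  have hD2 : MemLp (fun q : ℝ × ℝ => D (s * q.1 + q.2)) 2 μ := hψ2.sub hψs2
  -- integrability of products
  have hXc2 : MemLp (fun q : ℝ × ℝ => q.1 - μX) 2 μ := hX2.sub (memLp_const _)
  have hD'int : Integrable (fun q : ℝ × ℝ => D' (s * q.1 + q.2)) μ := by
    apply Integrable.mono' (integrable_const (b - a))
      ((hD'c.measurable.comp hZmeas).aestronglyMeasurable)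
    filter_upwards with q
    rw [Real.norm_eq_abs]
    exact hD'bd _
  have hint_Dη : Integrable (fun q : ℝ × ℝ => D (s * q.1 + q.2) * q.2) μ :=
    memℒp_mul_integrable hD2 hH2
  have hint_Dx : Integrable (fun q : ℝ × ℝ => D (s * q.1 + q.2) * (q.1 - μX)) μ :=
    memℒp_mul_integrable hD2 hXc2
  set T : ℝ := ∫ q, D' (s * q.1 + q.2) ∂μ with hT_def
  -- Stein for the noise coordinate
  have E1 : ∫ q, D (s * q.1 + q.2) * q.2 ∂μ = w ^ 2 * T := by
    have inner : ∀ x : ℝ, ∫ η, D (s * x + η) * η ∂pH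
        = w ^ 2 * ∫ η, D' (s * x + η) ∂pH := by
      intro x
      have hd1 : ∀ t : ℝ, HasDerivAt (fun t => D (s * x + t)) (D' (s * x + t)) t := by
        intro t
        have h2 : HasDerivAt (fun t : ℝ => s * x + t) 1 t := (hasDerivAt_id t).const_add (s * x)
        have := (hDd (s * x + t)).comp t h2
        rw [mul_one] at this
        exact this
      have hst := stein_gaussianReal 0 hwne (fun t => D (s * x + t)) (fun t => D' (s * x + t))
        hd1 (hD'c.comp (continuous_const.add continuous_id)) (b - a) (fun t => hD'bd _)
      rw [hwco] at hst
      calc ∫ η, D (s * x + η) * η ∂pH = ∫ η, (η - 0) * D (s * x + η) ∂pH := by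
            congr 1; funext η; ring
        _ = w ^ 2 * ∫ η, D' (s * x + η) ∂pH := hst
    calc ∫ q, D (s * q.1 + q.2) * q.2 ∂μ
        = ∫ x, ∫ η, D (s * x + η) * η ∂pH ∂pX := integral_prod _ hint_Dη
      _ = ∫ x, w ^ 2 * ∫ η, D' (s * x + η) ∂pH ∂pX :=
            integral_congr_ae (Filter.Eventually.of_forall fun x => inner x)
      _ = w ^ 2 * ∫ x, ∫ η, D' (s * x + η) ∂pH ∂pX := integral_const_mul _ _
      _ = w ^ 2 * T := by rw [hT_def, integral_prod _ hD'int]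
  -- Stein for the signal coordinate
  have E2 : ∫ q, D (s * q.1 + q.2) * (q.1 - μX) ∂μ = s * v ^ 2 * T := by
    have inner : ∀ η : ℝ, ∫ x, D (s * x + η) * (x - μX) ∂pX
        = v ^ 2 * (s * ∫ x, D' (s * x + η) ∂pX) := by
      intro η
      have hd1 : ∀ t : ℝ, HasDerivAt (fun t => D (s * t + η)) (D' (s * t + η) * s) t := by
        intro t
        have h2 : HasDerivAt (fun t : ℝ => s * t + η) s t := by
          simpa using ((hasDerivAt_id t).const_mul s).add_const η
        exact (hDd (s * t + η)).comp t h2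
      have hM1 : ∀ t : ℝ, |D' (s * t + η) * s| ≤ (b - a) * s := by
        intro t
        rw [abs_mul, abs_of_pos hs0]
        exact mul_le_mul_of_nonneg_right (hD'bd _) hs0.le
      have hst := stein_gaussianReal μX hvne (fun t => D (s * t + η))
        (fun t => D' (s * t + η) * s) hd1
        ((hD'c.comp ((continuous_const.mul continuous_id).add continuous_const)).mul
          continuous_const) ((b - a) * s) hM1
      rw [hvco] at hst
      calc ∫ x, D (s * x + η) * (x - μX) ∂pX = ∫ x, (x - μX) * D (s * x + η) ∂pX := by
            congr 1; funext x; ring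
        _ = v ^ 2 * ∫ x, D' (s * x + η) * s ∂pX := hst
        _ = v ^ 2 * (s * ∫ x, D' (s * x + η) ∂pX) := by
            rw [integral_mul_const]; ring
    calc ∫ q, D (s * q.1 + q.2) * (q.1 - μX) ∂μ
        = ∫ η, ∫ x, D (s * x + η) * (x - μX) ∂pX ∂pH := integral_prod_symm _ hint_Dx
      _ = ∫ η, v ^ 2 * (s * ∫ x, D' (s * x + η) ∂pX) ∂pH :=
            integral_congr_ae (Filter.Eventually.of_forall fun η => inner η)
      _ = v ^ 2 * (s * ∫ η, ∫ x, D' (s * x + η) ∂pX ∂pH) := by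
            rw [integral_const_mul, integral_const_mul]
      _ = s * v ^ 2 * T := by rw [hT_def, integral_prod_symm _ hD'int]; ring
  -- the cross term
  have hint_cross : Integrable
      (fun q : ℝ × ℝ => D (s * q.1 + q.2) *
        (m * (s * q.1 + q.2) + (1 - s * m) * μX - q.1)) μ :=
    memℒp_mul_integrable hD2 (hψs2.sub hX2)
  have cross_eq : ∫ q, D (s * q.1 + q.2) *
      (m * (s * q.1 + q.2) + (1 - s * m) * μX - q.1) ∂μ = (P * m - s * v ^ 2) * T := by
    have hfun : (fun q : ℝ × ℝ => D (s * q.1 + q.2) *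
        (m * (s * q.1 + q.2) + (1 - s * m) * μX - q.1))
        = fun q => (m * s - 1) * (D (s * q.1 + q.2) * (q.1 - μX))
            + m * (D (s * q.1 + q.2) * q.2) := by
      funext q; ring
    rw [hfun, integral_add (hint_Dx.const_mul _) (hint_Dη.const_mul _),
      integral_const_mul, integral_const_mul, E1, E2, hP_def]
    ring
  have cross_nonneg : 0 ≤ (P * m - s * v ^ 2) * T := by
    have hfact : P * m - s * v ^ 2 = P * (m - r) := by rw [mul_sub, hPr]
    rcases hm_cases with ⟨hme, hlt⟩ | ⟨hme, hlt⟩ | hme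
    · have hT : 0 ≤ T := by
        rw [hT_def]
        apply integral_nonneg
        intro q
        have h1 := (hψconstr (s * q.1 + q.2)).1
        have he : D' (s * q.1 + q.2) = deriv ψ (s * q.1 + q.2) - m := rfl
        simp only [Pi.zero_apply]
        rw [he, hme]
        linarith
      apply mul_nonneg _ hT
      rw [hfact]
      apply mul_nonneg hP.le
      rw [hme]; linarith
    · have hT : T ≤ 0 := by
        rw [hT_def]
        apply integral_nonpos
        intro q
        have h1 := (hψconstr (s * q.1 + q.2)).2
        have he : D' (s * q.1 + q.2) = deriv ψ (s * q.1 + q.2) - m := rfl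
        simp only [Pi.zero_apply]
        rw [he, hme]
        linarith
      have hfac_le : P * m - s * v ^ 2 ≤ 0 := by
        rw [hfact]
        apply mul_nonpos_of_nonneg_of_nonpos hP.le
        rw [hme]; linarith
      nlinarith [hT, hfac_le]
    · rw [hfact, hme]; simp
  -- final assembly
  have hint_ψs_sq : Integrable (fun q : ℝ × ℝ =>
      (m * (s * q.1 + q.2) + (1 - s * m) * μX - q.1) ^ 2) μ := (hψs2.sub hX2).integrable_sq
  have hint_ψ_sq : Integrable (fun q : ℝ × ℝ => (ψ (s * q.1 + q.2) - q.1) ^ 2) μ :=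
    (hψ2.sub hX2).integrable_sq
  have hint_Dsq : Integrable (fun q : ℝ × ℝ => (D (s * q.1 + q.2)) ^ 2) μ := hD2.integrable_sq
  have key : ∫ q, (m * (s * q.1 + q.2) + (1 - s * m) * μX - q.1) ^ 2 ∂μ
      ≤ ∫ q, (ψ (s * q.1 + q.2) - q.1) ^ 2 ∂μ := by
    have hfun : (fun q : ℝ × ℝ => (ψ (s * q.1 + q.2) - q.1) ^ 2)
        = fun q => (m * (s * q.1 + q.2) + (1 - s * m) * μX - q.1) ^ 2
            + ((D (s * q.1 + q.2)) ^ 2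
              + 2 * (D (s * q.1 + q.2) *
                (m * (s * q.1 + q.2) + (1 - s * m) * μX - q.1))) := by
      funext q
      have he : D (s * q.1 + q.2)
          = ψ (s * q.1 + q.2) - (m * (s * q.1 + q.2) + (1 - s * m) * μX) := rfl
      rw [he]; ring
    have hint_c2 : Integrable (fun q : ℝ × ℝ =>
        2 * (D (s * q.1 + q.2) *
          (m * (s * q.1 + q.2) + (1 - s * m) * μX - q.1))) μ := hint_cross.const_mul 2
    have hint_rest : Integrable (fun q : ℝ × ℝ => (D (s * q.1 + q.2)) ^ 2
        + 2 * (D (s * q.1 + q.2) *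
          (m * (s * q.1 + q.2) + (1 - s * m) * μX - q.1))) μ := hint_Dsq.add hint_c2
    rw [hfun, integral_add hint_ψs_sq hint_rest, integral_add hint_Dsq hint_c2,
      integral_const_mul, cross_eq]
    have h1 : 0 ≤ ∫ q, (D (s * q.1 + q.2)) ^ 2 ∂μ := integral_nonneg fun q => sq_nonneg _
    linarith [cross_nonneg]
  have lhs_eq : (∫ x, ∫ η, (m * (s * x + η) + (1 - s * m) * μX - x) ^ 2 ∂pH ∂pX)
      = ∫ q, (m * (s * q.1 + q.2) + (1 - s * m) * μX - q.1) ^ 2 ∂μ :=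
    (integral_prod _ hint_ψs_sq).symm
  have rhs_eq : (∫ x, ∫ η, (ψ (s * x + η) - x) ^ 2 ∂pH ∂pX)
      = ∫ q, (ψ (s * q.1 + q.2) - q.1) ^ 2 ∂μ :=
    (integral_prod _ hint_ψ_sq).symm
  linarith [key, lhs_eq, rhs_eq]
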